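/- Define G(r) = −(1/2)·log(r⁴ − 1) and H(r) = (√3/2)·log((r² − 1)/(r² + 1)) for r > 1. Then for all r > 1: (i) G''(r) + (3/r)·G'(r) + G'(r)² − H'(r)² = 0, and (ii) H'(r) = 2√3·r·e^{2G(r)}. -/

import Mathlib

open Real Filter

private lemma aux_pos {r : ℝ} (hr : 1 < r) : 0 < r ^ 4 - 1 := by
  have : 1 < r ^ 4 := one_lt_pow₀ hr (by norm_num)
  linarith
private lemma aux_pos2 {r : ℝ} (hr : 1 < r) : 0 < r ^ 2 - 1 := by
  have : 1 < r ^ 2 := one_lt_pow₀ hr (by norm_num)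
  linarith
private lemma aux_pos3 (r : ℝ) : 0 < r ^ 2 + 1 := by positivity

private lemma hG_deriv {r : ℝ} (hr : 1 < r) :
    HasDerivAt (fun r : ℝ => -(1 / 2) * Real.log (r ^ 4 - 1))
      (-2 * r ^ 3 / (r ^ 4 - 1)) r := by
  have h := aux_pos hr
  have h1 : HasDerivAt (fun r : ℝ => r ^ 4 - 1) ((4 : ℕ) * r ^ 3) r := by
    simpa using (hasDerivAt_pow 4 r).sub_const 1
  have h2 := (h1.log h.ne').const_mul (-(1 / 2) : ℝ)
  refine h2.congr_deriv ?_
  field_simp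
  ring

private lemma hH_deriv {r : ℝ} (hr : 1 < r) :
    HasDerivAt (fun r : ℝ => (Real.sqrt 3 / 2) * Real.log ((r ^ 2 - 1) / (r ^ 2 + 1)))
      (2 * Real.sqrt 3 * r / (r ^ 4 - 1)) r := by
  have h1 : HasDerivAt (fun r : ℝ => r ^ 2 - 1) ((2 : ℕ) * r ^ 1) r := by
    simpa using (hasDerivAt_pow 2 r).sub_const 1
  have h2 : HasDerivAt (fun r : ℝ => r ^ 2 + 1) ((2 : ℕ) * r ^ 1) r := by
    simpa using (hasDerivAt_pow 2 r).add_const 1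
  have hd : HasDerivAt
      (fun r : ℝ => (Real.sqrt 3 / 2) * (Real.log (r ^ 2 - 1) - Real.log (r ^ 2 + 1)))
      ((Real.sqrt 3 / 2) * ((2 : ℕ) * r ^ 1 / (r ^ 2 - 1) - (2 : ℕ) * r ^ 1 / (r ^ 2 + 1))) r :=
    ((h1.log (aux_pos2 hr).ne').sub (h2.log (aux_pos3 r).ne')).const_mul _
  have heq : (fun r : ℝ => (Real.sqrt 3 / 2) * Real.log ((r ^ 2 - 1) / (r ^ 2 + 1)))
      =ᶠ[nhds r] (fun r : ℝ => (Real.sqrt 3 / 2) * (Real.log (r ^ 2 - 1) - Real.log (r ^ 2 + 1))) := by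
    filter_upwards [eventually_gt_nhds hr] with x hx
    rw [Real.log_div (aux_pos2 hx).ne' (aux_pos3 x).ne']
  have := hd.congr_of_eventuallyEq heq
  refine this.congr_deriv ?_
  have e1 := (aux_pos2 hr).ne'
  have e2 := (aux_pos3 r).ne'
  have e3 := (aux_pos hr).ne'
  field_simp
  ring

private lemma derivG_eq {r : ℝ} (hr : 1 < r) :
    deriv (fun r : ℝ => -(1 / 2) * Real.log (r ^ 4 - 1)) r = -2 * r ^ 3 / (r ^ 4 - 1) :=
  (hG_deriv hr).deriv

private lemma derivH_eq {r : ℝ} (hr : 1 < r) :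
    deriv (fun r : ℝ => (Real.sqrt 3 / 2) * Real.log ((r ^ 2 - 1) / (r ^ 2 + 1))) r
      = 2 * Real.sqrt 3 * r / (r ^ 4 - 1) :=
  (hH_deriv hr).deriv

private lemma derivG2_eq {r : ℝ} (hr : 1 < r) :
    deriv (deriv (fun r : ℝ => -(1 / 2) * Real.log (r ^ 4 - 1))) r
      = (2 * r ^ 6 + 6 * r ^ 2) / (r ^ 4 - 1) ^ 2 := by
  have heq : deriv (fun r : ℝ => -(1 / 2) * Real.log (r ^ 4 - 1))
      =ᶠ[nhds r] (fun x : ℝ => -2 * x ^ 3 / (x ^ 4 - 1)) := by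
    filter_upwards [eventually_gt_nhds hr] with x hx
    exact derivG_eq hx
  rw [heq.deriv_eq]
  have h := aux_pos hr
  have hnum : HasDerivAt (fun x : ℝ => -2 * x ^ 3) (-2 * ((3 : ℕ) * r ^ 2)) r :=
    (hasDerivAt_pow 3 r).const_mul (-2 : ℝ)
  have hden : HasDerivAt (fun x : ℝ => x ^ 4 - 1) ((4 : ℕ) * r ^ 3) r := by
    simpa using (hasDerivAt_pow 4 r).sub_const 1
  have := (hnum.div hden h.ne').deriv
  simp only [Pi.div_def] at this
  rw [this]
  field_simp
  ring

theorem spherically_symmetric_solution :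
    let G : ℝ → ℝ := fun r => -(1 / 2) * Real.log (r ^ 4 - 1)
    let H : ℝ → ℝ := fun r => (Real.sqrt 3 / 2) * Real.log ((r ^ 2 - 1) / (r ^ 2 + 1))
    ∀ r : ℝ, 1 < r →
      (deriv (deriv G) r + (3 / r) * deriv G r + (deriv G r) ^ 2 - (deriv H r) ^ 2 = 0) ∧
      (deriv H r = 2 * Real.sqrt 3 * r * Real.exp (2 * G r)) := by
  intro G H r hr
  have h := aux_pos hr
  have hr0 : r ≠ 0 := by positivity
  have hs : Real.sqrt 3 ^ 2 = 3 := Real.sq_sqrt (by norm_num)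
  constructor
  · rw [derivG2_eq hr, derivG_eq hr, derivH_eq hr]
    have key : (2 * Real.sqrt 3 * r / (r ^ 4 - 1)) ^ 2 = 12 * r ^ 2 / (r ^ 4 - 1) ^ 2 := by
      rw [div_pow, mul_pow, mul_pow, hs]; ring
    rw [key]
    field_simp
    ring
  · rw [derivH_eq hr]
    show _ = 2 * Real.sqrt 3 * r * Real.exp (2 * (-(1 / 2) * Real.log (r ^ 4 - 1)))
    have : 2 * (-(1 / 2) * Real.log (r ^ 4 - 1)) = -Real.log (r ^ 4 - 1) := by ring
    rw [this, Real.exp_neg, Real.exp_log h]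
    field_simp
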